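/- Let G be a finite simple bipartite graph with parts of sizes n_1 ≥ 1 and n_2 ≥ 1 such that 2n_1 ≤ √(n_2). Then G is hypoenergetic: E(G) < n, where n = n_1 + n_2 is the number of vertices of G. -/

import Mathlib

open Matrix Finset

/-- The energy of the vertex `i` of a finite simple graph `G`:
the `(i,i)` entry of `|A| = (A Aᴴ)^{1/2}`, where `A` is the adjacency matrix. -/
noncomputable def vertexEnergy {n : ℕ} (G : SimpleGraph (Fin n)) [DecidableRel G.Adj]
    (i : Fin n) : ℝ :=
  let hA := (Matrix.posSemidef_self_mul_conjTranspose (G.adjMatrix ℝ)).1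
  (hA.eigenvectorUnitary.1 * diagonal ((RCLike.ofReal : ℝ → ℝ) ∘ (√·) ∘ hA.eigenvalues) *
    (star hA.eigenvectorUnitary : Matrix (Fin n) (Fin n) ℝ)) i i

/-- The energy of a finite simple graph: the sum of the energies of its vertices. -/
noncomputable def graphEnergy {n : ℕ} (G : SimpleGraph (Fin n)) [DecidableRel G.Adj] : ℝ :=
  ∑ i, vertexEnergy G i

/-- Subadditivity of the matrix rank over ℝ. -/
lemma helper_rank_add_le {m : ℕ} (X Y : Matrix (Fin m) (Fin m) ℝ) :
    (X + Y).rank ≤ X.rank + Y.rank := by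
  rw [Matrix.rank, Matrix.rank, Matrix.rank]
  have h : LinearMap.range (X + Y).mulVecLin ≤
      LinearMap.range X.mulVecLin ⊔ LinearMap.range Y.mulVecLin := by
    rintro x ⟨v, rfl⟩
    rw [Matrix.mulVecLin_add]
    exact Submodule.add_mem_sup ⟨v, rfl⟩ ⟨v, rfl⟩
  exact le_trans (Submodule.finrank_mono h)
    (Submodule.finrank_add_le_finrank_add_finrank _ _)

/-- The trace of the positive square root equals the sum of square roots of eigenvalues. -/
lemma helper_trace_sqrt {m : ℕ} (M : Matrix (Fin m) (Fin m) ℝ) (hM : M.PosSemidef) :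
    (hM.1.eigenvectorUnitary.1 * diagonal ((RCLike.ofReal : ℝ → ℝ) ∘ (√·) ∘ hM.1.eigenvalues) *
      (star hM.1.eigenvectorUnitary : Matrix (Fin m) (Fin m) ℝ)).trace =
      ∑ i, Real.sqrt (hM.1.eigenvalues i) := by
  rw [Matrix.trace_mul_cycle]
  rw [Unitary.coe_star_mul_self, one_mul, Matrix.trace_diagonal]
  simp

/-- The trace of a hermitian real matrix equals the sum of its eigenvalues. -/
lemma helper_trace_eq_sum_eigenvalues {m : ℕ} (M : Matrix (Fin m) (Fin m) ℝ)
    (hM : M.IsHermitian) : M.trace = ∑ i, hM.eigenvalues i := by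
  conv_lhs => rw [hM.spectral_theorem, Unitary.conjStarAlgAut_apply]
  rw [Matrix.trace_mul_cycle, Unitary.coe_star_mul_self, one_mul, Matrix.trace_diagonal]
  simp

/-- Rank of an indicator diagonal matrix. -/
lemma helper_rank_indicator {m : ℕ} (V : Finset (Fin m)) :
    (Matrix.diagonal (fun i => if i ∈ V then (1:ℝ) else 0)).rank = V.card := by
  rw [Matrix.rank_diagonal, Fintype.card_subtype]
  congr 1
  ext i
  by_cases h : i ∈ V <;> simp [h]

theorem stmt_16 {n : ℕ} (G : SimpleGraph (Fin n)) [DecidableRel G.Adj]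
    (V₁ V₂ : Finset (Fin n)) (hdisj : Disjoint V₁ V₂) (hcover : V₁ ∪ V₂ = Finset.univ)
    (hbip : ∀ u v : Fin n, G.Adj u v → (u ∈ V₁ ∧ v ∈ V₂) ∨ (u ∈ V₂ ∧ v ∈ V₁))
    (n₁ n₂ : ℕ) (hn₁ : n₁ = V₁.card) (hn₂ : n₂ = V₂.card)
    (h₁ : 1 ≤ n₁) (h₂ : 1 ≤ n₂)
    (hsmall : 2 * (n₁ : ℝ) ≤ Real.sqrt (n₂ : ℝ)) :
    graphEnergy G < n := by
  classical
  set A : Matrix (Fin n) (Fin n) ℝ := G.adjMatrix ℝ with hA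
  have hM := Matrix.posSemidef_self_mul_conjTranspose A
  set M : Matrix (Fin n) (Fin n) ℝ := A * Aᴴ with hMdef
  set ν : Fin n → ℝ := hM.1.eigenvalues with hν
  have hν0 : ∀ i, 0 ≤ ν i := fun i => hM.eigenvalues_nonneg i
  -- cardinalities
  have hn : n = n₁ + n₂ := by
    have := Finset.card_union_of_disjoint hdisj
    rw [hcover, Finset.card_univ, Fintype.card_fin] at this
    omega
  -- energy = sum of sqrt of eigenvalues
  have hE : graphEnergy G = ∑ i, Real.sqrt (ν i) := by
    rw [graphEnergy]
    have : ∑ i, vertexEnergy G i = (hM.1.eigenvectorUnitary.1 *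
        diagonal ((RCLike.ofReal : ℝ → ℝ) ∘ (√·) ∘ hM.1.eigenvalues) *
        (star hM.1.eigenvectorUnitary : Matrix (Fin n) (Fin n) ℝ)).trace := rfl
    rw [this, helper_trace_sqrt M hM]
  -- trace bound: ∑ ν ≤ 2 n₁ n₂
  have htraceM : M.trace = ∑ i, ((G.degree i : ℝ)) := by
    have hAH : Aᴴ = A := by
      rw [hA, conjTranspose_eq_transpose_of_trivial, SimpleGraph.transpose_adjMatrix]
    rw [hMdef, hAH, Matrix.trace]
    congr 1
    ext i
    rw [Matrix.diag_apply, hA, SimpleGraph.adjMatrix_mul_self_apply_self]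
  have hdeg1 : ∀ i ∈ V₁, G.degree i ≤ n₂ := by
    intro i hi
    rw [hn₂, ← SimpleGraph.card_neighborFinset_eq_degree]
    apply Finset.card_le_card
    intro v hv
    rw [SimpleGraph.mem_neighborFinset] at hv
    rcases hbip i v hv with ⟨_, hv2⟩ | ⟨hi2, _⟩
    · exact hv2
    · exact absurd hi2 (Finset.disjoint_left.mp hdisj hi)
  have hdeg2 : ∀ i ∈ V₂, G.degree i ≤ n₁ := by
    intro i hi
    rw [hn₁, ← SimpleGraph.card_neighborFinset_eq_degree]
    apply Finset.card_le_card
    intro v hv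
    rw [SimpleGraph.mem_neighborFinset] at hv
    rcases hbip i v hv with ⟨hi1, _⟩ | ⟨_, hv1⟩
    · exact absurd hi (Finset.disjoint_left.mp hdisj hi1)
    · exact hv1
  have hsumdeg : ∑ i, ((G.degree i : ℝ)) ≤ 2 * n₁ * n₂ := by
    have hsplit : (Finset.univ : Finset (Fin n)) = V₁ ∪ V₂ := hcover.symm
    rw [hsplit, Finset.sum_union hdisj]
    have b1 : ∑ i ∈ V₁, ((G.degree i : ℝ)) ≤ (n₁ : ℝ) * n₂ := by
      calc ∑ i ∈ V₁, ((G.degree i : ℝ)) ≤ ∑ _i ∈ V₁, (n₂ : ℝ) := by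
            apply Finset.sum_le_sum
            intro i hi
            exact_mod_cast hdeg1 i hi
        _ = (n₁ : ℝ) * n₂ := by rw [Finset.sum_const, hn₁]; ring
    have b2 : ∑ i ∈ V₂, ((G.degree i : ℝ)) ≤ (n₂ : ℝ) * n₁ := by
      calc ∑ i ∈ V₂, ((G.degree i : ℝ)) ≤ ∑ _i ∈ V₂, (n₁ : ℝ) := by
            apply Finset.sum_le_sum
            intro i hi
            exact_mod_cast hdeg2 i hi
        _ = (n₂ : ℝ) * n₁ := by rw [Finset.sum_const, hn₂]; ring
    nlinarith
  have hTsum : ∑ i, ν i ≤ 2 * n₁ * n₂ := by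
    have := helper_trace_eq_sum_eigenvalues M hM.1
    rw [← this, htraceM] at *
    linarith [hsumdeg]
  -- rank bound
  have hrank : M.rank ≤ 2 * n₁ := by
    have hrM : M.rank = A.rank := Matrix.rank_self_mul_conjTranspose A
    set d₁ : Fin n → ℝ := fun i => if i ∈ V₁ then (1:ℝ) else 0 with hd₁
    set d₂ : Fin n → ℝ := fun i => if i ∈ V₂ then (1:ℝ) else 0 with hd₂
    have hsplitA : A = A * Matrix.diagonal d₁ + Matrix.diagonal d₁ * (A * Matrix.diagonal d₂) := by
      ext u v
      rw [Matrix.add_apply, Matrix.mul_diagonal, Matrix.diagonal_mul, Matrix.mul_diagonal]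
      simp only [hd₁, hd₂]
      by_cases hv1 : v ∈ V₁
      · have hv2 : v ∉ V₂ := Finset.disjoint_left.mp hdisj hv1
        simp [hv1, hv2]
      · have hv2 : v ∈ V₂ := by
          have : v ∈ V₁ ∪ V₂ := hcover ▸ Finset.mem_univ v
          rcases Finset.mem_union.mp this with h | h
          · exact absurd h hv1
          · exact h
        by_cases hadj : G.Adj u v
        · have hu1 : u ∈ V₁ := by
            rcases hbip u v hadj with ⟨hu, _⟩ | ⟨_, hv⟩
            · exact hu
            · exact absurd hv hv1
          simp [hv1, hv2, hu1]
        · have hz : A u v = 0 := by simp [hA, hadj]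
          simp [hv1, hv2, hz]
    have hr1 : (A * Matrix.diagonal d₁).rank ≤ n₁ := by
      calc (A * Matrix.diagonal d₁).rank ≤ (Matrix.diagonal d₁).rank :=
            Matrix.rank_mul_le_right _ _
        _ = n₁ := by rw [helper_rank_indicator, hn₁]
    have hr2 : (Matrix.diagonal d₁ * (A * Matrix.diagonal d₂)).rank ≤ n₁ := by
      calc (Matrix.diagonal d₁ * (A * Matrix.diagonal d₂)).rank ≤ (Matrix.diagonal d₁).rank :=
            Matrix.rank_mul_le_left _ _
        _ = n₁ := by rw [helper_rank_indicator, hn₁]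
    calc M.rank = A.rank := hrM
      _ ≤ (A * Matrix.diagonal d₁).rank + (Matrix.diagonal d₁ * (A * Matrix.diagonal d₂)).rank := by
          have h := helper_rank_add_le (A * Matrix.diagonal d₁)
            (Matrix.diagonal d₁ * (A * Matrix.diagonal d₂))
          rw [← hsplitA] at h
          exact h
      _ ≤ n₁ + n₁ := add_le_add hr1 hr2
      _ = 2 * n₁ := by ring
  -- Cauchy–Schwarz over nonzero eigenvalues
  set s : Finset (Fin n) := Finset.univ.filter (fun i => ν i ≠ 0) with hs
  have hscard : s.card = M.rank := by
    rw [hM.1.rank_eq_card_non_zero_eigs, Fintype.card_subtype]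
  have hEsum : ∑ i, Real.sqrt (ν i) = ∑ i ∈ s, Real.sqrt (ν i) := by
    symm
    apply Finset.sum_subset (Finset.filter_subset _ _)
    intro i _ hi
    rw [Finset.mem_filter, not_and] at hi
    have hz : ν i = 0 := not_not.mp (hi (Finset.mem_univ i))
    rw [hz, Real.sqrt_zero]
  have hCS : (∑ i ∈ s, Real.sqrt (ν i)) ^ 2 ≤ (s.card : ℝ) * ∑ i, ν i := by
    have := Finset.sum_mul_sq_le_sq_mul_sq s (fun _ => (1:ℝ)) (fun i => Real.sqrt (ν i))
    simp only [one_mul, one_pow] at this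
    calc (∑ i ∈ s, Real.sqrt (ν i)) ^ 2
        ≤ (∑ _i ∈ s, (1:ℝ)) * ∑ i ∈ s, Real.sqrt (ν i) ^ 2 := this
      _ = (s.card : ℝ) * ∑ i ∈ s, ν i := by
          rw [Finset.sum_const]
          congr 1
          · simp
          · apply Finset.sum_congr rfl
            intro i _
            exact Real.sq_sqrt (hν0 i)
      _ ≤ (s.card : ℝ) * ∑ i, ν i := by
          apply mul_le_mul_of_nonneg_left _ (by positivity)
          exact Finset.sum_le_sum_of_subset_of_nonneg (Finset.filter_subset _ _)
            (fun i _ _ => hν0 i)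
  -- put everything together
  have hEnn : 0 ≤ graphEnergy G := by
    rw [hE]
    exact Finset.sum_nonneg fun i _ => Real.sqrt_nonneg _
  have hn₂real : (0:ℝ) ≤ (n₂ : ℝ) := by positivity
  have hsq : (2 * (n₁:ℝ)) ^ 2 ≤ (n₂ : ℝ) := by
    have h0 : (0:ℝ) ≤ 2 * (n₁:ℝ) := by positivity
    calc (2 * (n₁:ℝ)) ^ 2 ≤ Real.sqrt (n₂:ℝ) ^ 2 := by
          apply pow_le_pow_left₀ h0 hsmall _
      _ = (n₂ : ℝ) := Real.sq_sqrt hn₂real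
  have hE2 : graphEnergy G ^ 2 ≤ (n₂ : ℝ) * (n₂ : ℝ) := by
    have hcard : (s.card : ℝ) ≤ 2 * (n₁ : ℝ) := by
      have : s.card ≤ 2 * n₁ := hscard ▸ hrank
      exact_mod_cast this
    have hT0 : (0:ℝ) ≤ ∑ i, ν i := Finset.sum_nonneg fun i _ => hν0 i
    calc graphEnergy G ^ 2 = (∑ i ∈ s, Real.sqrt (ν i)) ^ 2 := by rw [hE, hEsum]
      _ ≤ (s.card : ℝ) * ∑ i, ν i := hCS
      _ ≤ (2 * (n₁:ℝ)) * (2 * n₁ * n₂) := by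
          apply mul_le_mul hcard hTsum hT0 (by positivity)
      _ = (2 * (n₁:ℝ)) ^ 2 * n₂ := by ring
      _ ≤ (n₂ : ℝ) * n₂ := by
          apply mul_le_mul_of_nonneg_right hsq hn₂real
  have hEle : graphEnergy G ≤ (n₂ : ℝ) := by nlinarith
  have : (n₂ : ℝ) < (n : ℝ) := by
    rw [hn]
    push_cast
    have : (1:ℝ) ≤ (n₁:ℝ) := by exact_mod_cast h₁
    linarith
  linarith
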